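/- For all integers k ≥ 1 and ℓ with 2(2k+1) < ℓ, sin((2k+1)π/ℓ)/sin(π/ℓ) > 2(2k+1)/π. [This lower bound on Dim(□) is used together with the estimate on the middle interval I₃ to rule out unitarity.] -/

import Mathlib

open Real

/-- For integers `k ≥ 1` and `ℓ` with `2(2k+1) < ℓ`, the positive character value
`Dim(□) = sin((2k+1)π/ℓ)/sin(π/ℓ)` exceeds `2(2k+1)/π`. -/
theorem Dim_gt_linear_bound (k ℓ : ℕ) (hk : 1 ≤ k) (hℓ : 2 * (2 * k + 1) < ℓ) :
    Real.sin ((2 * k + 1) * Real.pi / ℓ) / Real.sin (Real.pi / ℓ) >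
      2 * (2 * (k : ℝ) + 1) / Real.pi := by
  have hℓ7 : (7 : ℕ) ≤ ℓ := by omega
  have hℓR : (7 : ℝ) ≤ ℓ := by exact_mod_cast hℓ7
  have hℓpos : (0 : ℝ) < ℓ := by linarith
  have hkR : (1 : ℝ) ≤ k := by exact_mod_cast hk
  have hℓR2 : 2 * (2 * (k : ℝ) + 1) < ℓ := by exact_mod_cast hℓ
  have hpi := Real.pi_pos
  set θ := Real.pi / ℓ with hθ
  have hθpos : 0 < θ := by positivity
  have hθlt : θ < Real.pi := by
    rw [hθ, div_lt_iff₀ hℓpos]; nlinarith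
  have hsinθpos : 0 < Real.sin θ := Real.sin_pos_of_pos_of_lt_pi hθpos hθlt
  have hsinθlt : Real.sin θ < θ := Real.sin_lt hθpos
  have hn : (2 * (k : ℝ) + 1) * Real.pi / ℓ = (2 * (k : ℝ) + 1) * θ := by
    rw [hθ]; ring
  rw [hn]
  have hle : (2 * (k : ℝ) + 1) * θ ≤ Real.pi / 2 := by
    rw [hθ, mul_div_assoc', div_le_div_iff₀ hℓpos (by norm_num : (0:ℝ) < 2)]
    nlinarith
  have hjordan : 2 / Real.pi * ((2 * (k : ℝ) + 1) * θ) ≤ Real.sin ((2 * (k : ℝ) + 1) * θ) :=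
    Real.mul_le_sin (by positivity) hle
  have hnum : 0 < 2 / Real.pi * ((2 * (k : ℝ) + 1) * θ) := by positivity
  calc 2 * (2 * (k : ℝ) + 1) / Real.pi
      = (2 / Real.pi * ((2 * (k : ℝ) + 1) * θ)) / θ := by field_simp
    _ < (2 / Real.pi * ((2 * (k : ℝ) + 1) * θ)) / Real.sin θ := by
        exact div_lt_div_of_pos_left hnum hsinθpos hsinθlt
    _ ≤ Real.sin ((2 * (k : ℝ) + 1) * θ) / Real.sin θ := by gcongr
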